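/- Along the second-order flow on Nil, the variable ξ = BC/A satisfies ξ' = 12 - 36α'/ξ, and A satisfies A'/A = -(4/ξ)(1 + α'/ξ). -/

import Mathlib

theorem nil_xi_equation (α' : ℝ) (A B C : ℝ → ℝ)
    (hApos : ∀ t, 0 < A t) (hBpos : ∀ t, 0 < B t) (hCpos : ∀ t, 0 < C t)
    (hA : ∀ t, HasDerivAt A (-4*(A t)^2/((B t)*(C t)) - 4*α'*(A t)^3/((B t)^2*(C t)^2)) t)
    (hB : ∀ t, HasDerivAt B (4*(A t)/(C t) - 20*α'*(A t)^2/((B t)*(C t)^2)) t)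
    (hC : ∀ t, HasDerivAt C (4*(A t)/(B t) - 20*α'*(A t)^2/((B t)^2*(C t))) t) :
    (∀ t, HasDerivAt (fun s => B s * C s / A s)
        (12 - 36*α'/(B t * C t / A t)) t) ∧
    (∀ t, HasDerivAt A (A t * (-(4/(B t * C t / A t)) * (1 + α'/(B t * C t / A t)))) t) := by
  constructor
  · intro t
    have hAne := (hApos t).ne'
    have hBne := (hBpos t).ne'
    have hCne := (hCpos t).ne'
    have h : HasDerivAt (fun s => B s * C s / A s) _ t := ((hB t).mul (hC t)).div (hA t) hAne
    convert h using 1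
    simp only [Pi.mul_apply]
    field_simp
    ring
  · intro t
    have hAne := (hApos t).ne'
    have hBne := (hBpos t).ne'
    have hCne := (hCpos t).ne'
    convert hA t using 1
    field_simp
    ring
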